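/- Let K = k[[ℏ]] with k a field of characteristic 0, B a Hopf algebra over K with invertible antipode, and (V, ρ, ρ*) a Drinfeld–Yetter module over B. Then ((id − ι∘ε) ⊗ id)(ρ*(v)) ∈ ℏ·(B ⊗ V) for all v ∈ V if and only if for every n ≥ 1 and every v ∈ V one has (d⁽ⁿ⁾ ⊗ id)(ρ*(v)) ∈ ℏⁿ·(B^{⊗n} ⊗ V); that is, V is admissible (its coaction factors through B′ ⊗ V) if and only if the image of ((id − ι∘ε) ⊗ id) ∘ ρ* is contained in ℏ·(B ⊗ V). -/

import Mathlib

open TensorProduct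

noncomputable section


/-- A Drinfeld–Yetter module over a Hopf algebra `B` whose antipode has inverse `S'`:
a left `B`-module structure `act` on `V` together with a right `B`-comodule structure
`coact : V → B ⊗ V` (in the conventions `((1 2)∘Δ ⊗ id) ∘ ρ* = (id ⊗ ρ*) ∘ ρ*` and
`(ε ⊗ id) ∘ ρ* = id`), satisfying the compatibility
`ρ*(b·v) = Σ b₍₃₎ v₍₋₁₎ S⁻¹(b₍₁₎) ⊗ b₍₂₎·v₍₀₎`, where `Δ⁽³⁾ = (Δ ⊗ id) ∘ Δ` and
`ρ*(v) = Σ v₍₋₁₎ ⊗ v₍₀₎` (stated in Sweedler form, for all finite representations of the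
relevant tensors). -/
structure IsDrinfeldYetter {R : Type} [CommRing R] {B : Type} [Ring B] [HopfAlgebra R B]
    (S' : B →ₗ[R] B) {V : Type} [AddCommGroup V] [Module R V]
    (act : B →ₗ[R] V →ₗ[R] V) (coact : V →ₗ[R] B ⊗[R] V) : Prop where
  act_mul : ∀ (b b' : B) (v : V), act (b * b') v = act b (act b' v)
  act_one : ∀ v : V, act 1 v = v
  coassoc : (TensorProduct.assoc R B B V).toLinearMap ∘ₗ
      TensorProduct.map ((TensorProduct.comm R B B).toLinearMap ∘ₗ
        (Coalgebra.comul : B →ₗ[R] B ⊗[R] B)) LinearMap.id ∘ₗ coact =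
    LinearMap.lTensor B coact ∘ₗ coact
  counit_coact : (TensorProduct.lid R V).toLinearMap ∘ₗ
      TensorProduct.map (Coalgebra.counit : B →ₗ[R] R) LinearMap.id ∘ₗ coact = LinearMap.id
  compat : ∀ (b : B) (v : V)
      (ι₁ : Type) (s₁ : Finset ι₁) (x y : ι₁ → B),
      Coalgebra.comul (R := R) b = ∑ i ∈ s₁, x i ⊗ₜ[R] y i →
      ∀ (ι₂ : Type) (s₂ : ι₁ → Finset ι₂) (x₁ x₂ : ι₁ → ι₂ → B),
      (∀ i ∈ s₁, Coalgebra.comul (R := R) (x i) = ∑ j ∈ s₂ i, x₁ i j ⊗ₜ[R] x₂ i j) →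
      ∀ (ι₃ : Type) (s₃ : Finset ι₃) (w : ι₃ → B) (u : ι₃ → V),
      coact v = ∑ l ∈ s₃, w l ⊗ₜ[R] u l →
      coact (act b v) =
        ∑ i ∈ s₁, ∑ j ∈ s₂ i, ∑ l ∈ s₃,
          (y i * w l * S' (x₁ i j)) ⊗ₜ[R] act (x₂ i j) (u l)

/-- A bundled module over `K`, used to form iterated tensor powers of `B`. -/
structure ModuleBundle (K : Type) [CommRing K] : Type 1 where
  carrier : Type
  [acg : AddCommGroup carrier]
  [mod : Module K carrier]

attribute [instance] ModuleBundle.acg ModuleBundle.mod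

variable (K : Type) [CommRing K] (B : Type) [Ring B] [HopfAlgebra K B]

/-- The iterated (right-nested) tensor power `Tn K B n ≅ B^{⊗(n+1)}`. -/
def Tn : ℕ → ModuleBundle K
  | 0 => ⟨B⟩
  | n + 1 => ⟨B ⊗[K] (Tn n).carrier⟩

/-- The iterated comultiplication `Δ⁽ⁿ⁺¹⁾ : B → B^{⊗(n+1)}`
(`Δ⁽¹⁾ = id`, `Δ⁽ⁿ⁺²⁾ = (id ⊗ Δ⁽ⁿ⁺¹⁾) ∘ Δ`). -/
def DeltaIter : (n : ℕ) → B →ₗ[K] (Tn K B n).carrier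
  | 0 => LinearMap.id
  | n + 1 => LinearMap.lTensor B (DeltaIter n) ∘ₗ (Coalgebra.comul : B →ₗ[K] B ⊗[K] B)

/-- `id − ι ∘ ε : B → B`. -/
def pProj : B →ₗ[K] B :=
  LinearMap.id - Algebra.linearMap K B ∘ₗ (Coalgebra.counit : B →ₗ[K] K)

/-- `(id − ι∘ε)^{⊗(n+1)}` on `B^{⊗(n+1)}`. -/
def pProjIter : (n : ℕ) → (Tn K B n).carrier →ₗ[K] (Tn K B n).carrier
  | 0 => pProj K B
  | n + 1 => TensorProduct.map (pProj K B) (pProjIter n)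

/-- `d⁽ⁿ⁺¹⁾ = (id − ι∘ε)^{⊗(n+1)} ∘ Δ⁽ⁿ⁺¹⁾ : B → B^{⊗(n+1)}`. -/
def dIter (n : ℕ) : B →ₗ[K] (Tn K B n).carrier := pProjIter K B n ∘ₗ DeltaIter K B n

/-- Auxiliary: divisibility is preserved by `lTensor`. -/
lemma lTensor_div {R : Type*} [CommRing R] {M N P : Type*}
    [AddCommGroup M] [Module R M] [AddCommGroup N] [Module R N]
    [AddCommGroup P] [Module R P] (r : R) (G : M →ₗ[R] N)
    (hG : ∀ m : M, ∃ c : N, G m = r • c) (y : P ⊗[R] M) :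
    ∃ z : P ⊗[R] N, LinearMap.lTensor P G y = r • z := by
  induction y using TensorProduct.induction_on with
  | zero => exact ⟨0, by simp⟩
  | tmul a m =>
    obtain ⟨c, hc⟩ := hG m
    exact ⟨a ⊗ₜ c, by simp [hc, TensorProduct.tmul_smul]⟩
  | add x y hx hy =>
    obtain ⟨z₁, h₁⟩ := hx
    obtain ⟨z₂, h₂⟩ := hy
    exact ⟨z₁ + z₂, by simp [h₁, h₂, smul_add]⟩

/-- Auxiliary: `d⁽ⁿ⁺²⁾ = (p ⊗ d⁽ⁿ⁺¹⁾) ∘ Δ`. -/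
lemma dIter_succ (n : ℕ) :
    dIter K B (n + 1) =
      TensorProduct.map (pProj K B) (dIter K B n) ∘ₗ (Coalgebra.comul : B →ₗ[K] B ⊗[K] B) := by
  have h0 : TensorProduct.map (pProj K B) (pProjIter K B n) ∘ₗ
      LinearMap.lTensor B (DeltaIter K B n) =
      TensorProduct.map (pProj K B) (dIter K B n) :=
    TensorProduct.ext' fun a b => by simp [dIter]
  rw [dIter]
  show TensorProduct.map (pProj K B) (pProjIter K B n) ∘ₗ
      (LinearMap.lTensor B (DeltaIter K B n) ∘ₗ (Coalgebra.comul : B →ₗ[K] B ⊗[K] B)) = _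
  rw [← LinearMap.comp_assoc, h0]

/-- The key structural identity: `(d⁽ⁿ⁺²⁾ ⊗ id) ∘ ρ*` is, up to canonical isomorphisms,
`lTensor ((p ⊗ id) ∘ ρ*)` composed with `(d⁽ⁿ⁺¹⁾ ⊗ id) ∘ ρ*`. Only coassociativity of the
coaction is used. -/
lemma key_identity {V : Type} [AddCommGroup V] [Module K V]
    (coact : V →ₗ[K] B ⊗[K] V)
    (hco : (TensorProduct.assoc K B B V).toLinearMap ∘ₗ
      TensorProduct.map ((TensorProduct.comm K B B).toLinearMap ∘ₗ
        (Coalgebra.comul : B →ₗ[K] B ⊗[K] B)) LinearMap.id ∘ₗ coact =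
      LinearMap.lTensor B coact ∘ₗ coact)
    (n : ℕ) (v : V) :
    LinearMap.rTensor V (dIter K B (n + 1)) (coact v) =
      LinearMap.rTensor V (TensorProduct.comm K (Tn K B n).carrier B).toLinearMap
        ((TensorProduct.assoc K (Tn K B n).carrier B V).symm
          (LinearMap.lTensor (Tn K B n).carrier
            (LinearMap.rTensor V (pProj K B) ∘ₗ coact)
            (LinearMap.rTensor V (dIter K B n) (coact v)))) := by
  have hz : (TensorProduct.assoc K B B V).toLinearMap
      (TensorProduct.map ((TensorProduct.comm K B B).toLinearMap ∘ₗ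
        (Coalgebra.comul : B →ₗ[K] B ⊗[K] B)) LinearMap.id (coact v)) =
      LinearMap.lTensor B coact (coact v) := by
    simpa [LinearMap.comp_apply] using DFunLike.congr_fun hco v
  have h2 : TensorProduct.map ((TensorProduct.comm K B B).toLinearMap ∘ₗ
      (Coalgebra.comul : B →ₗ[K] B ⊗[K] B)) (LinearMap.id : V →ₗ[K] V) (coact v) =
      (TensorProduct.assoc K B B V).symm (LinearMap.lTensor B coact (coact v)) := by
    rw [← hz]; simp
  have hcc : ∀ w : (B ⊗[K] B) ⊗[K] V,
      LinearMap.rTensor V (TensorProduct.comm K B B).toLinearMap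
        (LinearMap.rTensor V (TensorProduct.comm K B B).toLinearMap w) = w := by
    intro w
    rw [← LinearMap.comp_apply, ← LinearMap.rTensor_comp]
    rw [show (TensorProduct.comm K B B).toLinearMap ∘ₗ (TensorProduct.comm K B B).toLinearMap =
      LinearMap.id from TensorProduct.ext' fun a b => by simp]
    simp
  have h3 : LinearMap.rTensor V (Coalgebra.comul : B →ₗ[K] B ⊗[K] B) (coact v) =
      LinearMap.rTensor V (TensorProduct.comm K B B).toLinearMap
        ((TensorProduct.assoc K B B V).symm (LinearMap.lTensor B coact (coact v))) := by
    rw [← h2]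
    rw [show TensorProduct.map ((TensorProduct.comm K B B).toLinearMap ∘ₗ
        (Coalgebra.comul : B →ₗ[K] B ⊗[K] B)) (LinearMap.id : V →ₗ[K] V) =
        LinearMap.rTensor V ((TensorProduct.comm K B B).toLinearMap ∘ₗ
        (Coalgebra.comul : B →ₗ[K] B ⊗[K] B)) from rfl]
    rw [LinearMap.rTensor_comp, LinearMap.comp_apply, hcc]
  have h4 : TensorProduct.map (dIter K B n) (TensorProduct.map (pProj K B) LinearMap.id) ∘ₗ
      LinearMap.lTensor B coact =
      LinearMap.lTensor (Tn K B n).carrier (LinearMap.rTensor V (pProj K B) ∘ₗ coact) ∘ₗ LinearMap.rTensor V (dIter K B n) :=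
    TensorProduct.ext' fun a w => by simp [LinearMap.rTensor]
  calc @id ((B ⊗[K] (Tn K B n).carrier) ⊗[K] V) (LinearMap.rTensor V (dIter K B (n + 1)) (coact v))
      = LinearMap.rTensor V (TensorProduct.map (pProj K B) (dIter K B n))
          (LinearMap.rTensor V (Coalgebra.comul : B →ₗ[K] B ⊗[K] B) (coact v)) := by
        have e2 := congrArg (fun f => LinearMap.rTensor V f (coact v)) (dIter_succ K B n)
        have e : LinearMap.rTensor V (TensorProduct.map (pProj K B) (dIter K B n) ∘ₗ
            (Coalgebra.comul : B →ₗ[K] B ⊗[K] B)) (coact v) =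
            LinearMap.rTensor V (TensorProduct.map (pProj K B) (dIter K B n))
              (LinearMap.rTensor V (Coalgebra.comul : B →ₗ[K] B ⊗[K] B) (coact v)) := by
          rw [LinearMap.rTensor_comp, LinearMap.comp_apply]
        exact e2.trans e

    _ = LinearMap.rTensor V (TensorProduct.map (pProj K B) (dIter K B n))
          (LinearMap.rTensor V (TensorProduct.comm K B B).toLinearMap
            ((TensorProduct.assoc K B B V).symm (LinearMap.lTensor B coact (coact v)))) := by
        rw [h3]
    _ = LinearMap.rTensor V (TensorProduct.comm K (Tn K B n).carrier B).toLinearMap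
          (LinearMap.rTensor V (TensorProduct.map (dIter K B n) (pProj K B))
            ((TensorProduct.assoc K B B V).symm (LinearMap.lTensor B coact (coact v)))) := by
        rw [← LinearMap.comp_apply, ← LinearMap.rTensor_comp,
          TensorProduct.map_comp_comm_eq, LinearMap.rTensor_comp, LinearMap.comp_apply]
    _ = LinearMap.rTensor V (TensorProduct.comm K (Tn K B n).carrier B).toLinearMap
          ((TensorProduct.assoc K (Tn K B n).carrier B V).symm
            (TensorProduct.map (dIter K B n) (TensorProduct.map (pProj K B) LinearMap.id)
              (LinearMap.lTensor B coact (coact v)))) := by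
        rw [show LinearMap.rTensor V (TensorProduct.map (dIter K B n) (pProj K B)) =
          TensorProduct.map (TensorProduct.map (dIter K B n) (pProj K B)) (LinearMap.id : V →ₗ[K] V) from rfl,
          TensorProduct.map_map_assoc_symm]
    _ = LinearMap.rTensor V (TensorProduct.comm K (Tn K B n).carrier B).toLinearMap
          ((TensorProduct.assoc K (Tn K B n).carrier B V).symm
            (LinearMap.lTensor (Tn K B n).carrier (LinearMap.rTensor V (pProj K B) ∘ₗ coact)
              (LinearMap.rTensor V (dIter K B n) (coact v)))) := by
        have h4' := DFunLike.congr_fun h4 (coact v)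
        simp only [LinearMap.comp_apply] at h4'
        rw [h4']

/-- (Admissibility criterion.) Let `K = k[[ℏ]]`, `B` a Hopf algebra over `K`
with invertible antipode and `(V, ρ, ρ*)` a Drinfeld–Yetter module over `B`. Then
`((id − ι∘ε) ⊗ id)(ρ*(v)) ∈ ℏ·(B ⊗ V)` for all `v` if and only if for every `n ≥ 1` and every
`v` one has `(d⁽ⁿ⁾ ⊗ id)(ρ*(v)) ∈ ℏⁿ·(B^{⊗n} ⊗ V)`; that is, `V` is admissible if and only if
the image of `((id − ι∘ε) ⊗ id) ∘ ρ*` is contained in `ℏ·(B ⊗ V)`. -/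
theorem statement15 {k : Type} [Field k] [CharZero k]
    {B : Type} [Ring B] [HopfAlgebra (PowerSeries k) B]
    (S' : B →ₗ[PowerSeries k] B)
    (hS'₁ : S' ∘ₗ (HopfAlgebra.antipode (PowerSeries k) : B →ₗ[PowerSeries k] B) = LinearMap.id)
    (hS'₂ : (HopfAlgebra.antipode (PowerSeries k) : B →ₗ[PowerSeries k] B) ∘ₗ S' = LinearMap.id)
    {V : Type} [AddCommGroup V] [Module (PowerSeries k) V]
    (act : B →ₗ[PowerSeries k] V →ₗ[PowerSeries k] V)
    (coact : V →ₗ[PowerSeries k] B ⊗[PowerSeries k] V)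
    (hDY : IsDrinfeldYetter S' act coact) :
    (∀ v : V, ∃ y : B ⊗[PowerSeries k] V,
        LinearMap.rTensor V (pProj (PowerSeries k) B) (coact v) =
          (PowerSeries.X : PowerSeries k) • y) ↔
    (∀ (n : ℕ) (v : V), ∃ y : (Tn (PowerSeries k) B n).carrier ⊗[PowerSeries k] V,
        LinearMap.rTensor V (dIter (PowerSeries k) B n) (coact v) =
          (PowerSeries.X : PowerSeries k) ^ (n + 1) • y) := by
  set K := PowerSeries k
  constructor
  · intro h n
    induction n with
    | zero =>
      intro v
      obtain ⟨y, hy⟩ := h v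
      refine ⟨y, ?_⟩
      have : dIter K B 0 = pProj K B := by
        rw [dIter]; rfl
      rw [this, pow_one]
      exact hy
    | succ n ih =>
      intro v
      obtain ⟨y, hy⟩ := ih v
      obtain ⟨z, hz⟩ := lTensor_div (P := (Tn K B n).carrier) (PowerSeries.X : K)
        (LinearMap.rTensor V (pProj K B) ∘ₗ coact)
        (fun w => by simpa [LinearMap.comp_apply] using h w) y
      refine ⟨LinearMap.rTensor V (TensorProduct.comm K (Tn K B n).carrier B).toLinearMap
        ((TensorProduct.assoc K (Tn K B n).carrier B V).symm z), ?_⟩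
      rw [key_identity K B coact hDY.coassoc n v, hy, map_smul, hz, map_smul, map_smul,
        map_smul, map_smul, smul_smul, ← pow_succ]
      rfl
  · intro h v
    obtain ⟨y, hy⟩ := h 0 v
    refine ⟨y, ?_⟩
    have : dIter K B 0 = pProj K B := by
      rw [dIter]; rfl
    rw [this, pow_one] at hy
    exact hy
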